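/- Let A ⊆ [0,∞) satisfy A ⊆ closure(interior A) and ([0,∞)∖A) ⊆ closure(interior([0,∞)∖A)). Let 0 ≤ S < T be real numbers and let I ⊆ [0,∞) be an interval with (S,T) ⊆ I ⊆ [S,T]. Fix t ∈ [0,∞) such that t+S ∉ ∂A and t+T ∉ ∂A (frontiers in [0,∞)). Then there exists N such that for all n ≥ N: (∃ s ∈ I ∩ ℕ/n with ⌊nt⌋/n + s ∈ A) holds if and only if (∃ s ∈ I with t+s ∈ A) holds. Equivalently, applying this to the complement of A, the corresponding statement with ∃ replaced by ∀ also holds for all sufficiently large n. -/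

import Mathlib

open scoped NNReal Topology

/-- The grid `ℕ/n = {k/n : k ∈ ℕ}` inside `[0,∞)`. -/
def grid (n : ℕ) : Set ℝ≥0 := {t | ∃ k : ℕ, t = (k : ℝ≥0) / (n : ℝ≥0)}

/-- `Λ_n(t) := ⌊nt⌋/n`. -/
noncomputable def Lam (n : ℕ) (t : ℝ≥0) : ℝ≥0 := (⌊(n : ℝ≥0) * t⌋₊ : ℝ≥0) / (n : ℝ≥0)

lemma Lam_le {n : ℕ} (hn : n ≠ 0) (t : ℝ≥0) : Lam n t ≤ t := by
  have hp : (0:ℝ≥0) < n := by exact_mod_cast Nat.pos_of_ne_zero hn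
  rw [Lam, div_le_iff₀ hp, mul_comm]
  exact Nat.floor_le (by positivity)

lemma lt_Lam_add {n : ℕ} (hn : n ≠ 0) (t : ℝ≥0) : t < Lam n t + 1/n := by
  have hp : (0:ℝ≥0) < n := by exact_mod_cast Nat.pos_of_ne_zero hn
  rw [Lam, ← add_div, lt_div_iff₀ hp, mul_comm]
  exact_mod_cast Nat.lt_floor_add_one ((n:ℝ≥0)*t)

lemma key (A : Set ℝ≥0) (hA : A ⊆ closure (interior A))
    (S T : ℝ≥0) (hST : S < T) (I : Set ℝ≥0)
    (hI₁ : Set.Ioo S T ⊆ I) (hI₂ : I ⊆ Set.Icc S T)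
    (t : ℝ≥0) (hS : t + S ∉ frontier A) (hT : t + T ∉ frontier A) :
    ∃ N : ℕ, ∀ n ≥ N, ((∃ s ∈ I ∩ grid n, Lam n t + s ∈ A) ↔ ∃ s ∈ I, t + s ∈ A) := by
  by_cases hE : ∃ s ∈ I, t + s ∈ A
  · obtain ⟨s₀, hs₀I, hs₀A⟩ := hE
    obtain ⟨hSs₀, hs₀T⟩ := hI₂ hs₀I
    have hO : IsOpen (interior A ∩ Set.Ioo (t+S) (t+T)) := isOpen_interior.inter isOpen_Ioo
    have hfr_or : (S < s₀ ∧ s₀ < T) ∨ (t + s₀ ∉ frontier A) := by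
      rcases eq_or_lt_of_le hSs₀ with h1 | h1
      · exact Or.inr (h1 ▸ hS)
      rcases eq_or_lt_of_le hs₀T with h2 | h2
      · exact Or.inr (by rw [h2]; exact hT)
      · exact Or.inl ⟨h1, h2⟩
    have hne : (interior A ∩ Set.Ioo (t+S) (t+T)).Nonempty := by
      rcases hfr_or with ⟨h1, h2⟩ | hfr
      · have hx : t + s₀ ∈ Set.Ioo (t+S) (t+T) :=
          ⟨add_lt_add_right h1 t, add_lt_add_right h2 t⟩
        obtain ⟨u, hu1, hu2⟩ := mem_closure_iff.mp (hA hs₀A) _ isOpen_Ioo hx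
        exact ⟨u, hu2, hu1⟩
      · have hAint : t + s₀ ∈ interior A := by
          by_contra hc
          exact hfr ⟨subset_closure hs₀A, hc⟩
        have hcl : t + s₀ ∈ closure (Set.Ioo (t+S) (t+T)) := by
          rw [closure_Ioo (ne_of_lt (add_lt_add_right hST t))]
          exact ⟨add_le_add_right hSs₀ t, add_le_add_right hs₀T t⟩
        exact mem_closure_iff.mp hcl _ isOpen_interior hAint
    obtain ⟨u, huA, huI⟩ := hne
    obtain ⟨ε, hε, hball⟩ := Metric.isOpen_iff.mp hO u ⟨huA, huI⟩
    obtain ⟨N, hN⟩ := exists_nat_gt (1/ε)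
    refine ⟨max N 1, fun n hn => ?_⟩
    refine iff_of_true ?_ ⟨s₀, hs₀I, hs₀A⟩
    have hn1 : 1 ≤ n := le_trans (le_max_right _ _) hn
    have hn0 : n ≠ 0 := by omega
    have hnR : (0:ℝ) < n := by exact_mod_cast Nat.pos_of_ne_zero hn0
    have hn0' : (n:ℝ≥0) ≠ 0 := by exact_mod_cast hn0
    have hinv : 1/(n:ℝ) < ε := by
      have h1 : (1:ℝ)/ε < n := lt_of_lt_of_le hN (by exact_mod_cast le_trans (le_max_left _ _) hn)
      rw [div_lt_iff₀ hnR]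
      rw [div_lt_iff₀ hε] at h1
      nlinarith
    set k := ⌊(n:ℝ≥0) * u⌋₊ with hk
    have hkle : ((k:ℝ≥0))/n ≤ u := by
      rw [div_le_iff₀ (pos_iff_ne_zero.mpr hn0'), mul_comm]
      exact Nat.floor_le (by positivity)
    have hult : u < (k:ℝ≥0)/n + 1/n := by
      rw [← add_div, lt_div_iff₀ (pos_iff_ne_zero.mpr hn0'), mul_comm]
      exact_mod_cast Nat.lt_floor_add_one ((n:ℝ≥0)*u)
    have hkleR : ((k:ℝ))/n ≤ (u:ℝ) := by
      have := NNReal.coe_le_coe.mpr hkle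
      push_cast at this
      linarith
    have hultR : (u:ℝ) < (k:ℝ)/n + 1/n := by
      have := NNReal.coe_lt_coe.mpr hult
      push_cast at this
      linarith
    have h1 : ((k:ℝ≥0)/n) ∈ interior A ∩ Set.Ioo (t+S) (t+T) := by
      apply hball
      rw [Metric.mem_ball, NNReal.dist_eq]
      rw [abs_sub_comm, abs_of_nonneg (by push_cast; linarith)]
      push_cast
      linarith
    have h2 : ((k:ℝ≥0)/n + 1/n) ∈ interior A ∩ Set.Ioo (t+S) (t+T) := by
      apply hball
      rw [Metric.mem_ball, NNReal.dist_eq]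
      rw [abs_of_nonneg (by push_cast; linarith)]
      push_cast
      linarith
    -- real versions of facts
    have hL1 : ((Lam n t : ℝ≥0):ℝ) ≤ t := by exact_mod_cast Lam_le hn0 t
    have hL2 : (t:ℝ) < ((Lam n t : ℝ≥0):ℝ) + 1/n := by
      have := NNReal.coe_lt_coe.mpr (lt_Lam_add hn0 t)
      push_cast at this
      linarith
    have hk1 : (t:ℝ) + S < (k:ℝ)/n := by
      have := NNReal.coe_lt_coe.mpr h1.2.1
      push_cast at this
      linarith
    have hk2 : (k:ℝ)/n + 1/n < (t:ℝ) + T := by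
      have := NNReal.coe_lt_coe.mpr h2.2.2
      push_cast at this
      linarith
    -- k > floor(n t)
    have hfloor_lt : ⌊(n:ℝ≥0)*t⌋₊ < k := by
      by_contra hc
      push_neg at hc
      have h3 : ((k:ℝ≥0))/n ≤ Lam n t := by
        rw [Lam]
        gcongr
      have h4 : ((k:ℝ≥0))/n ≤ t + S := le_trans h3 (le_trans (Lam_le hn0 t) le_self_add)
      exact absurd h1.2.1 (not_lt.mpr h4)
    set j := k - ⌊(n:ℝ≥0)*t⌋₊ with hj
    have hLs : Lam n t + (j:ℝ≥0)/n = (k:ℝ≥0)/n := by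
      rw [Lam, ← add_div]
      congr 1
      exact_mod_cast (by omega : ⌊(n:ℝ≥0)*t⌋₊ + j = k)
    have hLsR : ((Lam n t : ℝ≥0):ℝ) + (j:ℝ)/n = (k:ℝ)/n := by
      have := congrArg (fun x : ℝ≥0 => (x:ℝ)) hLs
      push_cast at this
      linarith
    refine ⟨(j:ℝ≥0)/n, ⟨hI₁ ⟨?_, ?_⟩, ⟨j, rfl⟩⟩, ?_⟩
    · rw [← NNReal.coe_lt_coe]
      push_cast
      linarith
    · rw [← NNReal.coe_lt_coe]
      push_cast
      linarith
    · rw [hLs]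
      exact interior_subset h1.1
  · push_neg at hE
    have hIoo : Set.Ioo (t+S) (t+T) ⊆ Aᶜ := by
      intro x hx
      have hxt : t ≤ x := le_trans le_self_add hx.1.le
      have hts : t + (x - t) = x := add_tsub_cancel_of_le hxt
      have hsI : x - t ∈ Set.Ioo S T := by
        constructor
        · rw [lt_tsub_iff_left]
          exact hx.1
        · rw [tsub_lt_iff_left hxt]
          exact hx.2
      intro hxA
      exact hE (x - t) (hI₁ hsI) (by rwa [hts])
    have hne : t + S ≠ t + T := ne_of_lt (add_lt_add_right hST t)
    have hsub : Set.Icc (t+S) (t+T) ⊆ closure Aᶜ := by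
      rw [← closure_Ioo hne]
      exact closure_mono hIoo
    have hnot_int : ∀ x ∈ Set.Icc (t+S) (t+T), x ∉ interior A := by
      intro x hx
      have := hsub hx
      rw [closure_compl] at this
      exact this
    have hSint : t + S ∈ interior Aᶜ := by
      rw [interior_compl]
      intro hc
      exact hS ⟨hc, hnot_int _ ⟨le_refl _, (add_lt_add_right hST t).le⟩⟩
    have hTint : t + T ∈ interior Aᶜ := by
      rw [interior_compl]
      intro hc
      exact hT ⟨hc, hnot_int _ ⟨(add_lt_add_right hST t).le, le_refl _⟩⟩
    obtain ⟨ε, hε, hball⟩ := Metric.isOpen_iff.mp isOpen_interior (t+S) hSint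
    obtain ⟨N, hN⟩ := exists_nat_gt (1/ε)
    refine ⟨max N 1, fun n hn => ?_⟩
    refine iff_of_false ?_ (by rintro ⟨s, hs, hsa⟩; exact hE s hs hsa)
    rintro ⟨s, ⟨hsI, -⟩, hsA⟩
    obtain ⟨hSs, hsT⟩ := hI₂ hsI
    have hn1 : 1 ≤ n := le_trans (le_max_right _ _) hn
    have hn0 : n ≠ 0 := by omega
    have hnR : (0:ℝ) < n := by exact_mod_cast Nat.pos_of_ne_zero hn0
    have hinv : 1/(n:ℝ) < ε := by
      have h1 : (1:ℝ)/ε < n := lt_of_lt_of_le hN (by exact_mod_cast le_trans (le_max_left _ _) hn)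
      rw [div_lt_iff₀ hnR]
      rw [div_lt_iff₀ hε] at h1
      nlinarith
    have hmem : Lam n t + s ∈ Aᶜ := by
      rcases lt_or_ge (Lam n t + s) (t + S) with h | h
      · apply interior_subset (s := Aᶜ)
        apply hball
        rw [Metric.mem_ball, NNReal.dist_eq]
        have hL1 : ((Lam n t : ℝ≥0):ℝ) ≤ t := by exact_mod_cast Lam_le hn0 t
        have hL2 : (t:ℝ) < ((Lam n t : ℝ≥0):ℝ) + 1/n := by
          have := NNReal.coe_lt_coe.mpr (lt_Lam_add hn0 t)
          push_cast at this
          linarith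
        have hge : ((Lam n t : ℝ≥0):ℝ) + S ≤ ((Lam n t + s : ℝ≥0):ℝ) := by
          push_cast
          have : (S:ℝ) ≤ s := by exact_mod_cast hSs
          linarith
        have hlt : ((Lam n t + s : ℝ≥0):ℝ) < (t:ℝ) + S := by
          have := NNReal.coe_lt_coe.mpr h
          push_cast at this ⊢
          linarith
        rw [abs_sub_comm, abs_of_nonneg (by push_cast at hlt ⊢; linarith)]
        push_cast at hge hlt ⊢
        linarith
      · have hle : Lam n t + s ≤ t + T := add_le_add (Lam_le hn0 t) hsT
        rcases eq_or_lt_of_le h with heq | hlt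
        · rw [← heq]
          exact interior_subset hSint
        rcases eq_or_lt_of_le hle with heq2 | hlt2
        · rw [heq2]
          exact interior_subset hTint
        · exact hIoo ⟨hlt, hlt2⟩
    exact hmem hsA

/-- let `A ⊆ [0,∞)` satisfy `A ⊆ cl(int A)` and `Aᶜ ⊆ cl(int Aᶜ)`, let
`0 ≤ S < T` and `(S,T) ⊆ I ⊆ [S,T]`, and fix `t` with `t+S ∉ ∂A` and `t+T ∉ ∂A`. Then for
all sufficiently large `n`, the discrete-time semantics of `◇_I` at `Λ_n(t)` agrees with the
continuous-time semantics at `t`, and likewise with `∃` replaced by `∀`. -/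
theorem stmt_14 (A : Set ℝ≥0)
    (hA : A ⊆ closure (interior A)) (hAc : Aᶜ ⊆ closure (interior Aᶜ))
    (S T : ℝ≥0) (hST : S < T) (I : Set ℝ≥0)
    (hI₁ : Set.Ioo S T ⊆ I) (hI₂ : I ⊆ Set.Icc S T)
    (t : ℝ≥0) (hS : t + S ∉ frontier A) (hT : t + T ∉ frontier A) :
    (∃ N : ℕ, ∀ n ≥ N, ((∃ s ∈ I ∩ grid n, Lam n t + s ∈ A) ↔ ∃ s ∈ I, t + s ∈ A)) ∧
      (∃ N : ℕ, ∀ n ≥ N, ((∀ s ∈ I ∩ grid n, Lam n t + s ∈ A) ↔ ∀ s ∈ I, t + s ∈ A)) := by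
  constructor
  · exact key A hA S T hST I hI₁ hI₂ t hS hT
  · have hS' : t + S ∉ frontier Aᶜ := by rwa [frontier_compl]
    have hT' : t + T ∉ frontier Aᶜ := by rwa [frontier_compl]
    obtain ⟨N, hN⟩ := key Aᶜ hAc S T hST I hI₁ hI₂ t hS' hT'
    refine ⟨N, fun n hn => ?_⟩
    have h := hN n hn
    simp only [Set.mem_compl_iff] at h
    constructor
    · intro hall s hs
      by_contra hc
      obtain ⟨s', hs', hc'⟩ := h.mpr ⟨s, hs, hc⟩
      exact hc' (hall s' hs')
    · intro hall s hs
      by_contra hc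
      obtain ⟨s', hs', hc'⟩ := h.mp ⟨s, hs, hc⟩
      exact hc' (hall s' hs')
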